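/- For the binary asymmetric channel with crossover probabilities p₀ ∈ (0,1/2) and p₁ ∈ [p₀, 1-p₀], the KL divergence from the output distribution given input 1 to that given input 0 is at least the KL divergence from the output distribution given input 0 to that given input 1; i.e., D([p₁, 1-p₁] ‖ [1-p₀, p₀]) ≥ D([1-p₀, p₀] ‖ [p₁, 1-p₁]). -/

import Mathlib

open Real Set

private lemma key1 {t : ℝ} (ht0 : 0 < t) (ht1 : t ≤ 1) :
    Real.log t ≤ 2 * (t - 1) / (t + 1) := by
  have hD : ∀ x : ℝ, 0 < x →
      HasDerivAt (fun s : ℝ => 2 * (s - 1) / (s + 1) - Real.log s)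
        (4 / (x + 1) ^ 2 - x⁻¹) x := by
    intro x hx
    have h1' : HasDerivAt (fun s : ℝ => 2 * (s - 1)) 2 x := by
      simpa using ((hasDerivAt_id x).sub_const 1).const_mul 2
    have h2' : HasDerivAt (fun s : ℝ => s + 1) 1 x := (hasDerivAt_id x).add_const 1
    have h3 : HasDerivAt (fun s : ℝ => 2 * (s - 1) / (s + 1))
        ((2 * (x + 1) - 2 * (x - 1) * 1) / (x + 1) ^ 2) x :=
      h1'.div h2' (by positivity)
    have h4 := h3.sub (Real.hasDerivAt_log (ne_of_gt hx))
    have he : 2 * (x + 1) - 2 * (x - 1) * 1 = 4 := by ring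
    rw [he] at h4
    exact h4
  have anti : AntitoneOn (fun s : ℝ => 2 * (s - 1) / (s + 1) - Real.log s) (Ioc 0 1) := by
    apply antitoneOn_of_deriv_nonpos (convex_Ioc 0 1)
    · intro x hx
      exact ((hD x hx.1).continuousAt).continuousWithinAt
    · intro x hx
      rw [interior_Ioc] at hx
      exact (hD x hx.1).differentiableAt.differentiableWithinAt
    · intro x hx
      rw [interior_Ioc] at hx
      rw [(hD x hx.1).deriv]
      have hx0 := hx.1
      rw [sub_nonpos, inv_eq_one_div, div_le_div_iff₀ (by positivity) hx0]
      nlinarith [sq_nonneg (x - 1)]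
  have h1m : (1:ℝ) ∈ Ioc (0:ℝ) 1 := by constructor <;> norm_num
  have htm : t ∈ Ioc (0:ℝ) 1 := ⟨ht0, ht1⟩
  have := anti htm h1m ht1
  simp only [Real.log_one] at this
  have h10 : 2 * ((1:ℝ) - 1) / (1 + 1) - 0 = 0 := by norm_num
  rw [h10] at this
  linarith

private noncomputable def F (b x : ℝ) : ℝ :=
  (x + b) * (Real.log x - Real.log b) + (2 - x - b) * (Real.log (1 - x) - Real.log (1 - b))

private lemma F_hasDeriv (b : ℝ) {x : ℝ} (hx0 : 0 < x) (hx1 : x < 1) :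
    HasDerivAt (F b)
      (Real.log x - Real.log b - (Real.log (1 - x) - Real.log (1 - b))
        + b / x - (1 - b) / (1 - x)) x := by
  have hlx : HasDerivAt (fun s : ℝ => Real.log s - Real.log b) x⁻¹ x := by
    simpa using (Real.hasDerivAt_log (ne_of_gt hx0)).sub_const (Real.log b)
  have h1x : HasDerivAt (fun s : ℝ => 1 - s) (-1) x := by
    simpa using (hasDerivAt_id x).const_sub 1
  have hl1x : HasDerivAt (fun s : ℝ => Real.log (1 - s) - Real.log (1 - b))
      ((1 - x)⁻¹ * (-1)) x := by
    have := (Real.hasDerivAt_log (by intro h; linarith [h] : (1:ℝ) - x ≠ 0)).comp x h1x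
    simpa using this.sub_const (Real.log (1 - b))
  have ha : HasDerivAt (fun s : ℝ => s + b) 1 x := (hasDerivAt_id x).add_const b
  have hb' : HasDerivAt (fun s : ℝ => 2 - s - b) (-1) x := by
    simpa using ((hasDerivAt_id x).const_sub 2).sub_const b
  have h := (ha.mul hlx).add (hb'.mul hl1x)
  have h1xne : (1:ℝ) - x ≠ 0 := by intro hh; linarith [hh]
  unfold F
  refine h.congr_deriv ?_
  field_simp
  ring

private lemma F_nonneg_right {b : ℝ} (hb : 1/2 < b) (hb1 : b < 1)
    {x : ℝ} (hx : 1/2 ≤ x) (hxb : x ≤ b) : 0 ≤ F b x := by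
  have anti : AntitoneOn (F b) (Icc (1/2) b) := by
    apply antitoneOn_of_deriv_nonpos (convex_Icc _ _)
    · intro y hy
      have hy0 : 0 < y := lt_of_lt_of_le (by norm_num) hy.1
      have hy1 : y < 1 := lt_of_le_of_lt hy.2 hb1
      exact (F_hasDeriv b hy0 hy1).continuousAt.continuousWithinAt
    · intro y hy
      rw [interior_Icc] at hy
      have hy0 : 0 < y := lt_trans (by norm_num) hy.1
      have hy1 : y < 1 := lt_trans hy.2 hb1
      exact (F_hasDeriv b hy0 hy1).differentiableAt.differentiableWithinAt
    · intro y hy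
      rw [interior_Icc] at hy
      obtain ⟨hy1, hy2⟩ := hy
      have hy0 : 0 < y := lt_trans (by norm_num) hy1
      have hyl1 : y < 1 := lt_trans hy2 hb1
      rw [(F_hasDeriv b hy0 hyl1).deriv]
      have hb0 : 0 < b := by linarith
      have h1b : 0 < 1 - b := by linarith
      have h1y : 0 < 1 - y := by linarith
      set t : ℝ := y * (1 - b) / (b * (1 - y)) with ht
      have ht0 : 0 < t := by rw [ht]; positivity
      have ht1 : t ≤ 1 := by
        rw [ht, div_le_one (by positivity)]
        nlinarith
      have hlogt : Real.log y - Real.log b - (Real.log (1 - y) - Real.log (1 - b))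
          = Real.log t := by
        rw [ht, Real.log_div (by positivity) (by positivity),
          Real.log_mul (ne_of_gt hy0) (ne_of_gt h1b),
          Real.log_mul (ne_of_gt hb0) (ne_of_gt h1y)]
        ring
      rw [hlogt]
      have hkey := key1 ht0 ht1
      have hdne : y * (1 - b) + b * (1 - y) ≠ 0 := by positivity
      have halg : 2 * (t - 1) / (t + 1) + b / y - (1 - b) / (1 - y)
          = (y - b) ^ 2 * (1 - 2 * y) / (y * (1 - y) * (y * (1 - b) + b * (1 - y))) := by
        rw [ht]
        field_simp
        ring
      have hle : (y - b) ^ 2 * (1 - 2 * y) / (y * (1 - y) * (y * (1 - b) + b * (1 - y))) ≤ 0 := by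
        apply div_nonpos_of_nonpos_of_nonneg
        · nlinarith [sq_nonneg (y - b)]
        · positivity
      linarith
  have h0 : F b b = 0 := by simp [F]
  have hmono := anti ⟨hx, hxb⟩ ⟨by linarith, le_refl b⟩ hxb
  rw [h0] at hmono
  exact hmono

private lemma G_hasDeriv {b : ℝ} (hb : 1/2 < b) (hb1 : b < 1)
    {x : ℝ} (hx0 : 0 < x) (hx1 : x < 1) :
    HasDerivAt (fun s : ℝ => F b s - F b (1 - s))
      (2 * (Real.log (1 - b) - Real.log b) + (2 * b - 1) / (x * (1 - x))) x := by
  have h1x0 : 0 < 1 - x := by linarith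
  have h1x1 : 1 - x < 1 := by linarith
  have h1x : HasDerivAt (fun s : ℝ => 1 - s) (-1) x := by
    simpa using (hasDerivAt_id x).const_sub 1
  have hcomp := (F_hasDeriv b h1x0 h1x1).comp x h1x
  have h := (F_hasDeriv b hx0 hx1).sub hcomp
  refine h.congr_deriv ?_
  have h11 : (1:ℝ) - (1 - x) = x := by ring
  rw [h11]
  have hxne : x ≠ 0 := ne_of_gt hx0
  have h1xne : (1:ℝ) - x ≠ 0 := ne_of_gt h1x0
  field_simp
  ring

private lemma F_nonneg_left {b : ℝ} (hb : 1/2 < b) (hb1 : b < 1)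
    {x : ℝ} (hx : 1 - b ≤ x) (hx2 : x ≤ 1/2) : F b (1 - x) ≤ F b x := by
  have h1b0 : 0 < 1 - b := by linarith
  have hcc : ConcaveOn ℝ (Icc (1 - b) (1/2)) (fun s : ℝ => F b s - F b (1 - s)) := by
    apply AntitoneOn.concaveOn_of_deriv (convex_Icc _ _)
    · intro y hy
      have hy0 : 0 < y := lt_of_lt_of_le h1b0 hy.1
      have hy1 : y < 1 := lt_of_le_of_lt hy.2 (by norm_num)
      exact (G_hasDeriv hb hb1 hy0 hy1).continuousAt.continuousWithinAt
    · intro y hy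
      rw [interior_Icc] at hy
      have hy0 : 0 < y := lt_trans h1b0 hy.1
      have hy1 : y < 1 := lt_trans hy.2 (by norm_num)
      exact (G_hasDeriv hb hb1 hy0 hy1).differentiableAt.differentiableWithinAt
    · intro y hy z hz hyz
      rw [interior_Icc] at hy hz
      have hy0 : 0 < y := lt_trans h1b0 hy.1
      have hy1 : y < 1 := lt_trans hy.2 (by norm_num)
      have hz0 : 0 < z := lt_trans h1b0 hz.1
      have hz1 : z < 1 := lt_trans hz.2 (by norm_num)
      rw [(G_hasDeriv hb hb1 hy0 hy1).deriv, (G_hasDeriv hb hb1 hz0 hz1).deriv]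
      have hprod : y * (1 - y) ≤ z * (1 - z) := by nlinarith [hy.2, hz.2]
      have h2b : (0:ℝ) ≤ 2 * b - 1 := by linarith
      have hyy : (0:ℝ) < y * (1 - y) := mul_pos hy0 (by linarith)
      have := div_le_div_of_nonneg_left h2b hyy hprod
      linarith
  have hz1 : F b (1 - b) - F b (1 - (1 - b)) = 0 := by
    have : (1:ℝ) - (1 - b) = b := by ring
    rw [this]
    have hFb : F b b = 0 := by simp [F]
    have hF1b : F b (1 - b) = 0 := by
      simp only [F, show (1:ℝ) - (1 - b) = b from by ring]
      ring
    rw [hFb, hF1b]; ring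
  have hz2 : F b (1/2 : ℝ) - F b (1 - 1/2 : ℝ) = 0 := by norm_num
  have hmem1 : (1 - b) ∈ Icc (1 - b) (1/2:ℝ) := ⟨le_refl _, by linarith⟩
  have hmem2 : (1/2:ℝ) ∈ Icc (1 - b) (1/2:ℝ) := ⟨by linarith, le_refl _⟩
  have hseg : x ∈ segment ℝ (1 - b) (1/2 : ℝ) := by
    rw [segment_eq_Icc (by linarith : (1:ℝ) - b ≤ 1/2)]
    exact ⟨hx, hx2⟩
  have := hcc.ge_on_segment hmem1 hmem2 hseg
  rw [hz1] at this
  have h12 : (1:ℝ) - 1/2 = 1/2 := by norm_num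
  rw [h12] at this
  simp only [sub_self, min_self] at this
  linarith

/-- For a regularized BAC(p₀,p₁), D(P(Y|X=1) ‖ P(Y|X=0)) ≥ D(P(Y|X=0) ‖ P(Y|X=1)). -/
theorem bac_kl_divergence_asymmetry
    (p₀ p₁ : ℝ) (h0 : 0 < p₀) (h0' : p₀ < 1/2)
    (h1 : p₀ ≤ p₁) (h1' : p₁ ≤ 1 - p₀) :
    (1 - p₀) * Real.logb 2 ((1 - p₀) / p₁) + p₀ * Real.logb 2 (p₀ / (1 - p₁))
      ≤ p₁ * Real.logb 2 (p₁ / (1 - p₀)) + (1 - p₁) * Real.logb 2 ((1 - p₁) / p₀) := by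
  have hb : 1/2 < 1 - p₀ := by linarith
  have hb1 : 1 - p₀ < 1 := by linarith
  have hp1 : 0 < p₁ := lt_of_lt_of_le h0 h1
  have hp1' : p₁ < 1 := lt_of_le_of_lt h1' hb1
  have h1p1 : 0 < 1 - p₁ := by linarith
  have hF : 0 ≤ F (1 - p₀) p₁ := by
    rcases le_total p₁ (1/2) with hc | hc
    · have ha1 : F (1 - p₀) (1 - p₁) ≤ F (1 - p₀) p₁ :=
        F_nonneg_left hb hb1 (by linarith) hc
      have ha2 : 0 ≤ F (1 - p₀) (1 - p₁) :=
        F_nonneg_right hb hb1 (by linarith) (by linarith)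
      linarith
    · exact F_nonneg_right hb hb1 hc h1'
  have hlog2 : (0:ℝ) < Real.log 2 := Real.log_pos (by norm_num)
  have hkey : (p₁ * Real.logb 2 (p₁ / (1 - p₀)) + (1 - p₁) * Real.logb 2 ((1 - p₁) / p₀))
      - ((1 - p₀) * Real.logb 2 ((1 - p₀) / p₁) + p₀ * Real.logb 2 (p₀ / (1 - p₁)))
      = F (1 - p₀) p₁ / Real.log 2 := by
    simp only [Real.logb, F]
    rw [Real.log_div (ne_of_gt hp1) (ne_of_gt (by linarith : (0:ℝ) < 1 - p₀)),
      Real.log_div (ne_of_gt h1p1) (ne_of_gt h0),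
      Real.log_div (ne_of_gt (by linarith : (0:ℝ) < 1 - p₀)) (ne_of_gt hp1),
      Real.log_div (ne_of_gt h0) (ne_of_gt h1p1),
      show (1:ℝ) - (1 - p₀) = p₀ from by ring]
    field_simp
    ring
  have hpos : 0 ≤ F (1 - p₀) p₁ / Real.log 2 := div_nonneg hF hlog2.le
  linarith
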